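/- arXiv:1909.10720 — 3 statements merged into one kernel-verified Lean document; each statement's English description precedes it below -/
import Mathlib

section
/- Define F(j,i,j',i',j'',i'') = \sum_{r=0}^{\min(i,i')} (-1)^r t^{j'r + r(r+1)/2} \alpha_{i+j-r} / (\alpha_{i-r} \alpha_r \alpha_{i'-r}) for nonnegative integers satisfying the balance condition i'-j = i''-j' = i-j''. Then F is a polynomial in t with integer coefficients. -/
open scoped BigOperators

/-- The indeterminate `t`, as a rational function over `ℚ`. -/
noncomputable def t : RatFunc ℚ := RatFunc.X

/-- `α m = ∏_{s=1}^m (1 - t^s)`. -/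
noncomputable def al (m : ℕ) : RatFunc ℚ := ∏ s ∈ Finset.range m, (1 - t ^ (s + 1))

/-- The honeycomb vertex fugacity. -/
noncomputable def F (j i j' i' j'' i'' : ℕ) : RatFunc ℚ :=
  ∑ r ∈ Finset.range (min i i' + 1),
    (-1 : RatFunc ℚ) ^ r * t ^ (j' * r + r * (r + 1) / 2) * al (i + j - r) /
      (al (i - r) * al r * al (i' - r))

/-! ### Auxiliary lemmas -/

lemma one_sub_t_pow_ne (s : ℕ) : (1 : RatFunc ℚ) - t ^ (s+1) ≠ 0 := by
  intro h
  have h2 : (t : RatFunc ℚ) ^ (s+1) = 1 := by linear_combination -h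
  have h3 : (algebraMap (Polynomial ℚ) (RatFunc ℚ)) (Polynomial.X ^ (s+1)) =
      algebraMap (Polynomial ℚ) (RatFunc ℚ) 1 := by
    simpa [t, map_pow] using h2
  have h4 := RatFunc.algebraMap_injective (K := ℚ) h3
  have hd := congrArg Polynomial.natDegree h4
  simp [Polynomial.natDegree_X_pow] at hd

lemma al_ne_zero (m : ℕ) : al m ≠ 0 :=
  Finset.prod_ne_zero_iff.2 fun s _ => one_sub_t_pow_ne s

lemma al_zero : al 0 = 1 := by simp [al]

lemma al_succ (m : ℕ) : al (m+1) = al m * (1 - t ^ (m+1)) := Finset.prod_range_succ _ _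

/-- The ring hom `ℤ[X] → RatFunc ℚ`. -/
noncomputable def phi : Polynomial ℤ →+* RatFunc ℚ :=
  (algebraMap (Polynomial ℚ) (RatFunc ℚ)).comp (Polynomial.mapRingHom (Int.castRingHom ℚ))

/-- The subring of integer polynomials in `t`. -/
noncomputable def R : Subring (RatFunc ℚ) := phi.range

lemma t_mem : t ∈ R := ⟨Polynomial.X, by simp [phi, t]⟩
lemma t_pow_mem (k : ℕ) : t ^ k ∈ R := pow_mem t_mem k
lemma one_sub_t_pow_mem (k : ℕ) : (1 : RatFunc ℚ) - t ^ k ∈ R :=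
  sub_mem (one_mem R) (t_pow_mem k)

lemma al_mem (m : ℕ) : al m ∈ R := by
  induction m with
  | zero => rw [al_zero]; exact one_mem R
  | succ n ih => rw [al_succ]; exact mul_mem ih (one_sub_t_pow_mem _)

lemma al_div_al_mem (m k : ℕ) : al (m + k) / al m ∈ R := by
  induction k with
  | zero => simpa [div_self (al_ne_zero m)] using one_mem R
  | succ n ih =>
      have h : al (m + (n+1)) / al m = (al (m+n) / al m) * (1 - t ^ (m+n+1)) := by
        rw [show m + (n+1) = (m+n)+1 from rfl, al_succ]
        field_simp
      rw [h]
      exact mul_mem ih (one_sub_t_pow_mem _)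

lemma tri_succ (s : ℕ) : (s+1)*((s+1)+1)/2 = s*(s+1)/2 + (s+1) := by
  obtain ⟨k, hk⟩ := Nat.even_mul_succ_self s
  have e1 : (s+1)*((s+1)+1) = s*(s+1) + (s+1)*2 := by ring
  omega

/-- The alternating `q`-binomial identity. -/
lemma qb : ∀ n : ℕ, ∑ r ∈ Finset.range (n+1),
    (-1 : RatFunc ℚ) ^ r * t ^ (r*(r+1)/2) / (al r * al (n - r)) = 1 := by
  intro n
  induction n with
  | zero => simp [al_zero]
  | succ n ih =>
      have key : (1 - t ^ (n+1)) * (∑ r ∈ Finset.range (n+1+1),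
          (-1 : RatFunc ℚ) ^ r * t ^ (r*(r+1)/2) / (al r * al (n+1 - r)))
          = (1 - t ^ (n+1)) * 1 := by
        rw [Finset.mul_sum]
        have split : ∀ r ∈ Finset.range (n+1+1),
            (1 - t ^ (n+1)) * ((-1 : RatFunc ℚ) ^ r * t ^ (r*(r+1)/2) / (al r * al (n+1 - r)))
            = ((-1 : RatFunc ℚ) ^ r * t ^ (r*(r+1)/2) * (1 - t ^ (n+1-r)) / (al r * al (n+1 - r)))
            + ((-1 : RatFunc ℚ) ^ r * t ^ (r*(r+1)/2) * (t ^ (n+1-r) * (1 - t ^ r)) / (al r * al (n+1 - r))) := by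
          intro r hr
          rw [Finset.mem_range] at hr
          have hsplit : (1 : RatFunc ℚ) - t ^ (n+1) = (1 - t ^ (n+1-r)) + t ^ (n+1-r) * (1 - t ^ r) := by
            have hpow : t ^ (n+1-r) * t ^ r = t ^ (n+1) := by
              rw [← pow_add]; congr 1; omega
            linear_combination hpow
          rw [hsplit]; ring
        rw [Finset.sum_congr rfl split, Finset.sum_add_distrib]
        have hA : ∑ r ∈ Finset.range (n+1+1),
            ((-1 : RatFunc ℚ) ^ r * t ^ (r*(r+1)/2) * (1 - t ^ (n+1-r)) / (al r * al (n+1 - r)))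
            = ∑ r ∈ Finset.range (n+1),
            (-1 : RatFunc ℚ) ^ r * t ^ (r*(r+1)/2) / (al r * al (n - r)) := by
          rw [Finset.sum_range_succ]
          have last : ((-1 : RatFunc ℚ) ^ (n+1) * t ^ ((n+1)*((n+1)+1)/2) * (1 - t ^ (n+1-(n+1))) / (al (n+1) * al (n+1 - (n+1)))) = 0 := by
            rw [Nat.sub_self, pow_zero, sub_self, mul_zero, zero_div]
          rw [last, add_zero]
          apply Finset.sum_congr rfl
          intro r hr
          rw [Finset.mem_range] at hr
          have e : n+1-r = (n-r)+1 := by omega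
          have h1 : al (n+1-r) = al (n-r) * (1 - t ^ (n+1-r)) := by
            rw [e, al_succ, ← e]
          have hne : (1 : RatFunc ℚ) - t ^ (n+1-r) ≠ 0 := by
            rw [e]; exact one_sub_t_pow_ne _
          rw [h1, div_eq_div_iff
            (by exact mul_ne_zero (al_ne_zero r) (mul_ne_zero (al_ne_zero (n-r)) hne))
            (mul_ne_zero (al_ne_zero r) (al_ne_zero (n-r)))]
          ring
        have hB : ∑ r ∈ Finset.range (n+1+1),
            ((-1 : RatFunc ℚ) ^ r * t ^ (r*(r+1)/2) * (t ^ (n+1-r) * (1 - t ^ r)) / (al r * al (n+1 - r)))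
            = -t^(n+1) * ∑ r ∈ Finset.range (n+1),
            (-1 : RatFunc ℚ) ^ r * t ^ (r*(r+1)/2) / (al r * al (n - r)) := by
          rw [Finset.sum_range_succ']
          have first : ((-1 : RatFunc ℚ) ^ 0 * t ^ (0*(0+1)/2) * (t ^ (n+1-0) * (1 - t ^ 0)) / (al 0 * al (n+1 - 0))) = 0 := by
            simp
          rw [first, add_zero, Finset.mul_sum]
          apply Finset.sum_congr rfl
          intro s hs
          rw [Finset.mem_range] at hs
          have h2 : n + 1 - (s+1) = n - s := by omega
          have hpow : t ^ ((s+1)*((s+1)+1)/2) * t ^ (n-s) = t ^ (s*(s+1)/2) * t ^ (n+1) := by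
            rw [← pow_add, ← pow_add]
            congr 1
            have := tri_succ s
            omega
          rw [h2, al_succ, ← mul_div_assoc, div_eq_div_iff
            (mul_ne_zero (mul_ne_zero (al_ne_zero s) (one_sub_t_pow_ne s)) (al_ne_zero (n-s)))
            (mul_ne_zero (al_ne_zero s) (al_ne_zero (n-s)))]
          linear_combination (-((-1:RatFunc ℚ)^s) * (1 - t^(s+1)) * al s * al (n-s)) * hpow
        rw [hA, hB, ih]
        ring
      have h := mul_left_cancel₀ (one_sub_t_pow_ne n) key
      simpa using h

lemma F_base (j j' i' a b : ℕ) : F j 0 j' i' a b = al j / al i' := by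
  rw [F]; simp [al_zero]

lemma F_corner1 (i i' a b : ℕ) (h : i' ≤ i) : F 0 i 0 i' a b = 1 := by
  rw [F, min_eq_right h]
  have congr1 : ∀ r ∈ Finset.range (i'+1),
      (-1 : RatFunc ℚ) ^ r * t ^ (0 * r + r * (r + 1) / 2) * al (i + 0 - r) /
      (al (i - r) * al r * al (i' - r))
      = (-1 : RatFunc ℚ) ^ r * t ^ (r*(r+1)/2) / (al r * al (i' - r)) := by
    intro r hr
    rw [Finset.mem_range] at hr
    rw [show i + 0 - r = i - r from by omega, show 0 * r + r * (r+1)/2 = r * (r+1)/2 from by omega,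
      show (-1:RatFunc ℚ)^r * t^(r*(r+1)/2) * al (i-r) = al (i-r) * ((-1)^r * t^(r*(r+1)/2)) from by ring,
      show al (i-r) * al r * al (i'-r) = al (i-r) * (al r * al (i'-r)) from by ring,
      mul_div_mul_left _ _ (al_ne_zero (i-r))]
  rw [Finset.sum_congr rfl congr1, qb i']

lemma F_corner2 (j i a b : ℕ) : F j i 0 (i+j) a b = 1 := by
  rw [F, min_eq_left (Nat.le_add_right i j)]
  have congr1 : ∀ r ∈ Finset.range (i+1),
      (-1 : RatFunc ℚ) ^ r * t ^ (0 * r + r * (r + 1) / 2) * al (i + j - r) /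
      (al (i - r) * al r * al (i + j - r))
      = (-1 : RatFunc ℚ) ^ r * t ^ (r*(r+1)/2) / (al r * al (i - r)) := by
    intro r hr
    rw [Finset.mem_range] at hr
    rw [show 0 * r + r * (r+1)/2 = r * (r+1)/2 from by omega,
      show (-1:RatFunc ℚ)^r * t^(r*(r+1)/2) * al (i+j-r) = al (i+j-r) * ((-1)^r * t^(r*(r+1)/2)) from by ring,
      show al (i-r) * al r * al (i+j-r) = al (i+j-r) * (al r * al (i-r)) from by ring,
      mul_div_mul_left _ _ (al_ne_zero (i+j-r))]
  rw [Finset.sum_congr rfl congr1, qb i]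

lemma inv_shift (m : ℕ) (Y Z : RatFunc ℚ) (hY : Y ≠ 0) (hZ : Z ≠ 0) :
    (al m * Y * Z)⁻¹ = (1 - t^(m+1)) * (al (m+1) * Y * Z)⁻¹ := by
  have hm := al_ne_zero m
  have hE := one_sub_t_pow_ne m
  rw [al_succ]
  field_simp

lemma core1 (m k : ℕ) (c Y Z : RatFunc ℚ) (hY : Y ≠ 0) (hZ : Z ≠ 0) :
    c * al (m+k+2) / (al (m+1) * Y * Z)
    = t^(k+1) * (c * al (m+k+1) / (al m * Y * Z))
      + (1-t^(k+1)) * (c * al (m+k+1) / (al (m+1) * Y * Z)) := by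
  have h1 : al (m+k+2) = al (m+k+1) * (1 - t^(m+k+2)) := al_succ (m+k+1)
  have hpow : t^(m+1) * t^(k+1) = (t : RatFunc ℚ)^(m+k+2) := by
    rw [← pow_add]; congr 1; omega
  rw [h1, div_eq_mul_inv, div_eq_mul_inv, div_eq_mul_inv,
    inv_shift m Y Z hY hZ]
  linear_combination (-(c * al (m+k+1)) * (al (m+1) * Y * Z)⁻¹) * hpow

lemma core2 (m k : ℕ) (c Y Z : RatFunc ℚ) (hY : Y ≠ 0) (hZ : Z ≠ 0) :
    c * al (m+k+2) / (al (m+1) * Y * Z)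
    = c * al (m+k+1) / (al m * Y * Z)
      + t^(m+1) * (1 - t^(k+1)) * (c * al (m+k+1) / (al (m+1) * Y * Z)) := by
  have h1 : al (m+k+2) = al (m+k+1) * (1 - t^(m+k+2)) := al_succ (m+k+1)
  have hpow : t^(m+1) * t^(k+1) = (t : RatFunc ℚ)^(m+k+2) := by
    rw [← pow_add]; congr 1; omega
  rw [h1, div_eq_mul_inv, div_eq_mul_inv, div_eq_mul_inv,
    inv_shift m Y Z hY hZ]
  linear_combination (-(c * al (m+k+1)) * (al (m+1) * Y * Z)⁻¹) * hpow

lemma recC (j i j' i' : ℕ) :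
    F (j+1) (i+1) j' i' 0 0
    = t^(j+1) * F (j+1) i j' i' 0 0 + (1 - t^(j+1)) * F j (i+1) j' i' 0 0 := by
  simp only [F]
  have termwise : ∀ r, r ≤ i → r ≤ i' →
      (-1 : RatFunc ℚ) ^ r * t ^ (j' * r + r * (r + 1) / 2) * al (i + 1 + (j+1) - r) /
        (al (i + 1 - r) * al r * al (i' - r))
      = t^(j+1) * ((-1 : RatFunc ℚ) ^ r * t ^ (j' * r + r * (r + 1) / 2) * al (i + (j+1) - r) /
          (al (i - r) * al r * al (i' - r)))
        + (1 - t^(j+1)) * ((-1 : RatFunc ℚ) ^ r * t ^ (j' * r + r * (r + 1) / 2) * al (i + 1 + j - r) /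
          (al (i + 1 - r) * al r * al (i' - r))) := by
    intro r hri hri'
    rw [show i + 1 + (j+1) - r = (i - r) + j + 2 from by omega,
      show i + (j+1) - r = (i - r) + j + 1 from by omega,
      show i + 1 + j - r = (i - r) + j + 1 from by omega,
      show i + 1 - r = (i - r) + 1 from by omega]
    exact core1 (i-r) j _ _ _ (al_ne_zero r) (al_ne_zero (i'-r))
  by_cases h : i' ≤ i
  · rw [min_eq_right (by omega : i' ≤ i + 1), min_eq_right h,
      Finset.mul_sum, Finset.mul_sum, ← Finset.sum_add_distrib]
    refine Finset.sum_congr rfl ?_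
    intro r hr
    rw [Finset.mem_range] at hr
    exact termwise r (by omega) (by omega)
  · push_neg at h
    rw [min_eq_left (by omega : i + 1 ≤ i'), min_eq_left (by omega : i ≤ i')]
    have hL : ∑ r ∈ Finset.range (i+1+1),
        (-1 : RatFunc ℚ) ^ r * t ^ (j' * r + r * (r + 1) / 2) * al (i + 1 + (j+1) - r) /
          (al (i + 1 - r) * al r * al (i' - r))
        = (∑ r ∈ Finset.range (i+1),
        (-1 : RatFunc ℚ) ^ r * t ^ (j' * r + r * (r + 1) / 2) * al (i + 1 + (j+1) - r) /
          (al (i + 1 - r) * al r * al (i' - r)))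
        + (-1 : RatFunc ℚ) ^ (i+1) * t ^ (j' * (i+1) + (i+1) * ((i+1) + 1) / 2) * al (i + 1 + (j+1) - (i+1)) /
          (al (i + 1 - (i+1)) * al (i+1) * al (i' - (i+1))) := Finset.sum_range_succ _ _
    have hR : ∑ r ∈ Finset.range (i+1+1),
        (-1 : RatFunc ℚ) ^ r * t ^ (j' * r + r * (r + 1) / 2) * al (i + 1 + j - r) /
          (al (i + 1 - r) * al r * al (i' - r))
        = (∑ r ∈ Finset.range (i+1),
        (-1 : RatFunc ℚ) ^ r * t ^ (j' * r + r * (r + 1) / 2) * al (i + 1 + j - r) /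
          (al (i + 1 - r) * al r * al (i' - r)))
        + (-1 : RatFunc ℚ) ^ (i+1) * t ^ (j' * (i+1) + (i+1) * ((i+1) + 1) / 2) * al (i + 1 + j - (i+1)) /
          (al (i + 1 - (i+1)) * al (i+1) * al (i' - (i+1))) := Finset.sum_range_succ _ _
    have hterm : ∑ r ∈ Finset.range (i+1),
        (-1 : RatFunc ℚ) ^ r * t ^ (j' * r + r * (r + 1) / 2) * al (i + 1 + (j+1) - r) /
          (al (i + 1 - r) * al r * al (i' - r))
        = t^(j+1) * ∑ r ∈ Finset.range (i+1),
            (-1 : RatFunc ℚ) ^ r * t ^ (j' * r + r * (r + 1) / 2) * al (i + (j+1) - r) /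
              (al (i - r) * al r * al (i' - r))
          + (1 - t^(j+1)) * ∑ r ∈ Finset.range (i+1),
            (-1 : RatFunc ℚ) ^ r * t ^ (j' * r + r * (r + 1) / 2) * al (i + 1 + j - r) /
              (al (i + 1 - r) * al r * al (i' - r)) := by
      rw [Finset.mul_sum, Finset.mul_sum, ← Finset.sum_add_distrib]
      refine Finset.sum_congr rfl ?_
      intro r hr
      rw [Finset.mem_range] at hr
      exact termwise r (by omega) (by omega)
    have hedge :
        (-1 : RatFunc ℚ) ^ (i+1) * t ^ (j' * (i+1) + (i+1) * ((i+1) + 1) / 2) * al (i + 1 + (j+1) - (i+1)) /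
          (al (i + 1 - (i+1)) * al (i+1) * al (i' - (i+1)))
        = (1 - t^(j+1)) * ((-1 : RatFunc ℚ) ^ (i+1) * t ^ (j' * (i+1) + (i+1) * ((i+1) + 1) / 2) * al (i + 1 + j - (i+1)) /
          (al (i + 1 - (i+1)) * al (i+1) * al (i' - (i+1)))) := by
      rw [show i + 1 + (j+1) - (i+1) = j + 1 from by omega,
        show i + 1 + j - (i+1) = j from by omega, al_succ j]
      ring
    linear_combination hL + hterm + hedge - (1 - t^(j+1)) * hR

lemma recD (j i j' i' : ℕ) :
    F (j+1) (i+1) (j'+1) i' 0 0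
    = F (j+1) i (j'+1) i' 0 0 + t^(i+1) * (1 - t^(j+1)) * F j (i+1) j' i' 0 0 := by
  simp only [F]
  have termwise : ∀ r, r ≤ i → r ≤ i' →
      (-1 : RatFunc ℚ) ^ r * t ^ ((j'+1) * r + r * (r + 1) / 2) * al (i + 1 + (j+1) - r) /
        (al (i + 1 - r) * al r * al (i' - r))
      = (-1 : RatFunc ℚ) ^ r * t ^ ((j'+1) * r + r * (r + 1) / 2) * al (i + (j+1) - r) /
          (al (i - r) * al r * al (i' - r))
        + t^(i+1) * (1 - t^(j+1)) * ((-1 : RatFunc ℚ) ^ r * t ^ (j' * r + r * (r + 1) / 2) * al (i + 1 + j - r) /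
          (al (i + 1 - r) * al r * al (i' - r))) := by
    intro r hri hri'
    rw [show i + 1 + (j+1) - r = (i - r) + j + 2 from by omega,
      show i + (j+1) - r = (i - r) + j + 1 from by omega,
      show i + 1 + j - r = (i - r) + j + 1 from by omega,
      show i + 1 - r = (i - r) + 1 from by omega,
      core2 (i-r) j _ _ _ (al_ne_zero r) (al_ne_zero (i'-r))]
    have hpow : t^(i+1) * t^(j' * r + r * (r+1)/2)
        = t^((i-r)+1) * t^((j'+1) * r + r * (r+1)/2) := by
      rw [← pow_add, ← pow_add]
      congr 1
      have e : (j'+1)*r = j'*r + r := by ring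
      omega
    linear_combination (-((1 - t^(j+1)) * ((-1:RatFunc ℚ)^r * al ((i-r)+j+1) /
      (al ((i-r)+1) * al r * al (i'-r))))) * hpow
  by_cases h : i' ≤ i
  · rw [min_eq_right (by omega : i' ≤ i + 1), min_eq_right h,
      Finset.mul_sum, ← Finset.sum_add_distrib]
    refine Finset.sum_congr rfl ?_
    intro r hr
    rw [Finset.mem_range] at hr
    exact termwise r (by omega) (by omega)
  · push_neg at h
    rw [min_eq_left (by omega : i + 1 ≤ i'), min_eq_left (by omega : i ≤ i')]
    have hL : ∑ r ∈ Finset.range (i+1+1),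
        (-1 : RatFunc ℚ) ^ r * t ^ ((j'+1) * r + r * (r + 1) / 2) * al (i + 1 + (j+1) - r) /
          (al (i + 1 - r) * al r * al (i' - r))
        = (∑ r ∈ Finset.range (i+1),
        (-1 : RatFunc ℚ) ^ r * t ^ ((j'+1) * r + r * (r + 1) / 2) * al (i + 1 + (j+1) - r) /
          (al (i + 1 - r) * al r * al (i' - r)))
        + (-1 : RatFunc ℚ) ^ (i+1) * t ^ ((j'+1) * (i+1) + (i+1) * ((i+1) + 1) / 2) * al (i + 1 + (j+1) - (i+1)) /
          (al (i + 1 - (i+1)) * al (i+1) * al (i' - (i+1))) := Finset.sum_range_succ _ _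
    have hR : ∑ r ∈ Finset.range (i+1+1),
        (-1 : RatFunc ℚ) ^ r * t ^ (j' * r + r * (r + 1) / 2) * al (i + 1 + j - r) /
          (al (i + 1 - r) * al r * al (i' - r))
        = (∑ r ∈ Finset.range (i+1),
        (-1 : RatFunc ℚ) ^ r * t ^ (j' * r + r * (r + 1) / 2) * al (i + 1 + j - r) /
          (al (i + 1 - r) * al r * al (i' - r)))
        + (-1 : RatFunc ℚ) ^ (i+1) * t ^ (j' * (i+1) + (i+1) * ((i+1) + 1) / 2) * al (i + 1 + j - (i+1)) /
          (al (i + 1 - (i+1)) * al (i+1) * al (i' - (i+1))) := Finset.sum_range_succ _ _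
    have hterm : ∑ r ∈ Finset.range (i+1),
        (-1 : RatFunc ℚ) ^ r * t ^ ((j'+1) * r + r * (r + 1) / 2) * al (i + 1 + (j+1) - r) /
          (al (i + 1 - r) * al r * al (i' - r))
        = ∑ r ∈ Finset.range (i+1),
            (-1 : RatFunc ℚ) ^ r * t ^ ((j'+1) * r + r * (r + 1) / 2) * al (i + (j+1) - r) /
              (al (i - r) * al r * al (i' - r))
          + t^(i+1) * (1 - t^(j+1)) * ∑ r ∈ Finset.range (i+1),
            (-1 : RatFunc ℚ) ^ r * t ^ (j' * r + r * (r + 1) / 2) * al (i + 1 + j - r) /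
              (al (i + 1 - r) * al r * al (i' - r)) := by
      rw [Finset.mul_sum, ← Finset.sum_add_distrib]
      refine Finset.sum_congr rfl ?_
      intro r hr
      rw [Finset.mem_range] at hr
      exact termwise r (by omega) (by omega)
    have hedge :
        (-1 : RatFunc ℚ) ^ (i+1) * t ^ ((j'+1) * (i+1) + (i+1) * ((i+1) + 1) / 2) * al (i + 1 + (j+1) - (i+1)) /
          (al (i + 1 - (i+1)) * al (i+1) * al (i' - (i+1)))
        = t^(i+1) * (1 - t^(j+1)) * ((-1 : RatFunc ℚ) ^ (i+1) * t ^ (j' * (i+1) + (i+1) * ((i+1) + 1) / 2) * al (i + 1 + j - (i+1)) /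
          (al (i + 1 - (i+1)) * al (i+1) * al (i' - (i+1)))) := by
      rw [show i + 1 + (j+1) - (i+1) = j + 1 from by omega,
        show i + 1 + j - (i+1) = j from by omega, al_succ j]
      have hpow : t^(i+1) * t^(j' * (i+1) + (i+1) * ((i+1)+1)/2)
          = t^((j'+1) * (i+1) + (i+1) * ((i+1)+1)/2) := by
        rw [← pow_add]
        congr 1
        have e : (j'+1)*(i+1) = j'*(i+1) + (i+1) := by ring
        omega
      linear_combination (-(((-1:RatFunc ℚ)^(i+1)) * (al j * (1 - t^(j+1))) /
        (al (i + 1 - (i+1)) * al (i+1) * al (i' - (i+1))))) * hpow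
    linear_combination hL + hterm + hedge - t^(i+1) * (1 - t^(j+1)) * hR

lemma recE (j i j' i' : ℕ) :
    F j (i+1) (j'+1) i' 0 0
    = F (j+1) i (j'+1) i' 0 0 + t^(i+1) * F j (i+1) j' i' 0 0 := by
  have hC := recC j i (j'+1) i'
  have hD := recD j i j' i'
  have key : (1 - t^(j+1)) * F j (i+1) (j'+1) i' 0 0
      = (1 - t^(j+1)) * (F (j+1) i (j'+1) i' 0 0 + t^(i+1) * F j (i+1) j' i' 0 0) := by
    linear_combination hD - hC
  exact mul_left_cancel₀ (one_sub_t_pow_ne j) key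

lemma main : ∀ n : ℕ, ∀ j i j' i' : ℕ, 2*i + j + j' ≤ n → i' ≤ i + j → j ≤ i' + j' →
    F j i j' i' 0 0 ∈ R := by
  intro n
  induction n with
  | zero =>
      intro j i j' i' hm h1 h2
      have hi : i = 0 := by omega
      have hj : j = 0 := by omega
      have hj' : j' = 0 := by omega
      have hi' : i' = 0 := by omega
      subst hi hj hj' hi'
      rw [F_base, al_zero, div_one]
      exact one_mem R
  | succ n IH =>
      intro j i j' i' hm h1 h2
      match i, h1, hm with
      | 0, h1, hm =>
          rw [F_base]
          have hij : i' ≤ j := by omega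
          rw [show j = i' + (j - i') from by omega]
          exact al_div_al_mem i' (j - i')
      | (i₀+1 : ℕ), h1, hm =>
          match j', h2, hm with
          | 0, h2, hm =>
              match j, h2, hm with
              | 0, h2, hm =>
                  rw [F_corner1 _ _ _ _ (by omega)]
                  exact one_mem R
              | (j₀+1 : ℕ), h2, hm =>
                  by_cases hc : i' = (i₀+1) + (j₀+1)
                  · rw [hc, F_corner2]
                    exact one_mem R
                  · rw [recC j₀ i₀ 0 i']
                    have m1 : F (j₀+1) i₀ 0 i' 0 0 ∈ R :=
                      IH (j₀+1) i₀ 0 i' (by omega) (by omega) (by omega)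
                    have m2 : F j₀ (i₀+1) 0 i' 0 0 ∈ R :=
                      IH j₀ (i₀+1) 0 i' (by omega) (by omega) (by omega)
                    exact add_mem (mul_mem (t_pow_mem _) m1)
                      (mul_mem (one_sub_t_pow_mem _) m2)
          | (j₀'+1 : ℕ), h2, hm =>
              by_cases hb : j = i' + (j₀'+1)
              · -- boundary: j ≥ 1, use recC
                match j, hb, h2, hm with
                | (j₀+1 : ℕ), hb, h2, hm =>
                    rw [recC j₀ i₀ (j₀'+1) i']
                    have m1 : F (j₀+1) i₀ (j₀'+1) i' 0 0 ∈ R :=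
                      IH (j₀+1) i₀ (j₀'+1) i' (by omega) (by omega) (by omega)
                    have m2 : F j₀ (i₀+1) (j₀'+1) i' 0 0 ∈ R :=
                      IH j₀ (i₀+1) (j₀'+1) i' (by omega) (by omega) (by omega)
                    exact add_mem (mul_mem (t_pow_mem _) m1)
                      (mul_mem (one_sub_t_pow_mem _) m2)
              · rw [recE j i₀ j₀' i']
                have m1 : F (j+1) i₀ (j₀'+1) i' 0 0 ∈ R :=
                  IH (j+1) i₀ (j₀'+1) i' (by omega) (by omega) (by omega)
                have m2 : F j (i₀+1) j₀' i' 0 0 ∈ R :=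
                  IH j (i₀+1) j₀' i' (by omega) (by omega) (by omega)
                exact add_mem m1 (mul_mem (t_pow_mem _) m2)

/-- Under the balance condition, the fugacity is a polynomial in  with integer
coefficients. -/
theorem fugacity_is_int_polynomial (j i j' i' j'' i'' : ℕ)
    (h1 : (i' : ℤ) - j = (i'' : ℤ) - j') (h2 : (i'' : ℤ) - j' = (i : ℤ) - j'') :
    ∃ p : Polynomial ℤ,
      F j i j' i' j'' i'' =
        algebraMap (Polynomial ℚ) (RatFunc ℚ) (p.map (Int.castRingHom ℚ)) := by
  have hA : i' ≤ i + j := by omega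
  have hB : j ≤ i' + j' := by omega
  obtain ⟨p, hp⟩ := main (2*i + j + j') j i j' i' le_rfl hA hB
  refine ⟨p, ?_⟩
  have he : F j i j' i' j'' i'' = F j i j' i' 0 0 := rfl
  rw [he, ← hp]
  simp [phi]
end

section
/- Define u(j,i,j',i',j'',i'') = (\alpha_{i+j} / (\alpha_i \alpha_{i'} \alpha_{i''} \alpha_j \alpha_{j''})) \cdot \sum_{n=0}^{\min(i,i')} \frac{(t^{-i};t)_n (t^{-i'};t)_n}{(t;t)_n (t^{-(i+j)};t)_n} t^{n(i''+1)} for nonnegative integers satisfying i'-j = i''-j' = i-j''. Then u(j,i,j',i',j'',i'') = u(j'',i',j',i,j,i''), i.e. u is invariant under the reflection (j,i,j',i',j'',i'') \mapsto (j'',i',j',i,j,i''). -/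
open scoped BigOperators

/-- The q-Pochhammer symbol `(x;t)_n = ∏_{r=0}^{n-1} (1 - x t^r)`. -/
noncomputable def poch (x : RatFunc ℚ) (n : ℕ) : RatFunc ℚ :=
  ∏ r ∈ Finset.range n, (1 - x * t ^ r)

/-- The normalized fugacity
`u(j,i,j',i',j'',i'') = (α_{i+j}/(α_i α_{i'} α_{i''} α_j α_{j''})) ·
  ∑_{n=0}^{min(i,i')} (t^{-i};t)_n (t^{-i'};t)_n / ((t;t)_n (t^{-(i+j)};t)_n) · t^{n(i''+1)}`. -/
noncomputable def u (j i j' i' j'' i'' : ℕ) : RatFunc ℚ :=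
  al (i + j) / (al i * al i' * al i'' * al j * al j'') *
    ∑ n ∈ Finset.range (min i i' + 1),
      poch (t ^ (-(i : ℤ))) n * poch (t ^ (-(i' : ℤ))) n /
          (poch t n * poch (t ^ (-((i : ℤ) + (j : ℤ)))) n) *
        t ^ (n * (i'' + 1))

/-- `u` is invariant under the reflection `(j,i,j',i',j'',i'') ↦ (j'',i',j',i,j,i'')`. -/
theorem u_reflection (j i j' i' j'' i'' : ℕ)
    (h1 : (i' : ℤ) - j = (i'' : ℤ) - j') (h2 : (i'' : ℤ) - j' = (i : ℤ) - j'') :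
    u j i j' i' j'' i'' = u j'' i' j' i j i'' := by
  have hij : i' + j'' = i + j := by omega
  have hij2 : -((i' : ℤ) + (j'' : ℤ)) = -((i : ℤ) + (j : ℤ)) := by omega
  unfold u
  rw [hij, hij2, min_comm i' i]
  congr 1
  · ring
  · refine Finset.sum_congr rfl fun n _ => by ring
end

section
/- Define u_{j,i,j',i',j'',i''} = \alpha_{i+j}\alpha_{j'} \sum_{n=0}^{\min(i,i')} \frac{(t^{-i};t)_n(t^{-i'};t)_n}{(t;t)_n(t^{-(i+j)};t)_n} t^{n(i''+1)} for nonnegative integer arguments satisfying the balance condition. Then u satisfies the recurrence u_{j,i,j',i',j'',i''+1} = t^i (1-t^{j'}) u_{j,i,j'-1,i',j'',i''} + (1-t^i) u_{j+1,i-1,j',i',j'',i''}, whenever all arguments on both sides are nonnegative and balanced. -/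
open scoped BigOperators

/-- The subscripted fugacity
`u_{j,i,j',i',j'',i''} = α_{i+j} α_{j'} ·
  ∑_{n=0}^{min(i,i')} (t^{-i};t)_n (t^{-i'};t)_n / ((t;t)_n (t^{-(i+j)};t)_n) · t^{n(i''+1)}`. -/
noncomputable def usub (j i j' i' j'' i'' : ℕ) : RatFunc ℚ :=
  al (i + j) * al j' *
    ∑ n ∈ Finset.range (min i i' + 1),
      poch (t ^ (-(i : ℤ))) n * poch (t ^ (-(i' : ℤ))) n /
          (poch t n * poch (t ^ (-((i : ℤ) + (j : ℤ)))) n) *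
        t ^ (n * (i'' + 1))


lemma t_ne_zero : t ≠ 0 := RatFunc.X_ne_zero

lemma L_aux (k n : ℕ) :
    (t ^ (k+1) - 1) * t ^ n * ∏ r ∈ Finset.range n, (t ^ k - t ^ r)
      = (∏ r ∈ Finset.range n, (t ^ (k+1) - t ^ r)) * (t ^ (k+1) - t ^ n) := by
  induction n with
  | zero => simp
  | succ n ih =>
    rw [Finset.prod_range_succ, Finset.prod_range_succ]
    linear_combination (t * (t ^ k - t ^ n)) * ih

lemma Q_eq (i n : ℕ) :
    (∏ r ∈ Finset.range n, (t ^ i - t ^ r)) = t ^ (i*n) * poch (t ^ (-(i:ℤ))) n := by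
  have h : (t:RatFunc ℚ) ^ i * t ^ (-(i:ℤ)) = 1 := by
    rw [← zpow_natCast t i, ← zpow_add₀ t_ne_zero]; simp
  rw [poch, pow_mul]
  calc ∏ r ∈ Finset.range n, (t ^ i - t ^ r)
      = ∏ r ∈ Finset.range n, (t ^ i * (1 - t ^ (-(i:ℤ)) * t ^ r)) :=
        Finset.prod_congr rfl fun r _ => by rw [mul_sub, mul_one, ← mul_assoc, h, one_mul]
    _ = (∏ _r ∈ Finset.range n, t ^ i) * ∏ r ∈ Finset.range n, (1 - t ^ (-(i:ℤ)) * t ^ r) :=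
        Finset.prod_mul_distrib
    _ = (t ^ i) ^ n * ∏ r ∈ Finset.range n, (1 - t ^ (-(i:ℤ)) * t ^ r) := by
        rw [Finset.prod_const, Finset.card_range]

lemma hkey (k n : ℕ) :
    poch (t ^ (-(k:ℤ)-1)) n * (t ^ n - t ^ (k+1))
      = (1 - t ^ (k+1)) * poch (t ^ (-(k:ℤ))) n := by
  have hL := L_aux k n
  have h1 := Q_eq (k+1) n
  have h2 := Q_eq k n
  have hc : (-(((k+1:ℕ)):ℤ)) = -(k:ℤ)-1 := by push_cast; ring
  rw [hc] at h1
  rw [h1, h2] at hL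
  have hpow : (t:RatFunc ℚ) ^ ((k+1)*n) ≠ 0 := pow_ne_zero _ t_ne_zero
  apply mul_left_cancel₀ hpow
  linear_combination hL

lemma poch_neg_zero (m n : ℕ) (h : m < n) : poch (t ^ (-(m:ℤ))) n = 0 := by
  unfold poch
  apply Finset.prod_eq_zero (Finset.mem_range.mpr h)
  rw [← zpow_natCast t m, ← zpow_add₀ t_ne_zero]
  simp

/-- The recurrence
`u_{j,i,j',i',j'',i''+1} = t^i (1-t^{j'}) u_{j,i,j'-1,i',j'',i''} + (1-t^i) u_{j+1,i-1,j',i',j'',i''}`,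
whenever all arguments on both sides are nonnegative and balanced. -/
theorem usub_recurrence (j i j' i' j'' i'' : ℕ) (hi : 1 ≤ i) (hj' : 1 ≤ j')
    (h1 : (i' : ℤ) - j = ((i'' : ℤ) + 1) - j')
    (h2 : ((i'' : ℤ) + 1) - j' = (i : ℤ) - j'') :
    usub j i j' i' j'' (i'' + 1) =
      t ^ i * (1 - t ^ j') * usub j i (j' - 1) i' j'' i'' +
        (1 - t ^ i) * usub (j + 1) (i - 1) j' i' j'' i'' := by
  clear h1 h2
  obtain ⟨k, rfl⟩ : ∃ k, i = k + 1 := ⟨i - 1, by omega⟩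
  obtain ⟨l, rfl⟩ : ∃ l, j' = l + 1 := ⟨j' - 1, by omega⟩
  clear hi hj'
  simp only [usub, Nat.add_sub_cancel]
  push_cast
  rw [show (-((k:ℤ) + ((j:ℤ)+1))) = -((k:ℤ)+1+(j:ℤ)) by ring]
  rw [show k + (j + 1) = k + 1 + j by omega]
  have hkk : ∀ n : ℕ, poch (t ^ (-((k:ℤ)+1))) n * (t ^ n - t ^ (k+1))
      = (1 - t ^ (k+1)) * poch (t ^ (-(k:ℤ))) n := by
    intro n
    have := hkey k n
    rwa [show (-(k:ℤ)-1) = -((k:ℤ)+1) by ring] at this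
  have hext :
      (∑ x ∈ Finset.range (k ⊓ i' + 1),
        poch (t ^ (-(k:ℤ))) x * poch (t ^ (-(i':ℤ))) x /
          (poch t x * poch (t ^ (-((k:ℤ) + 1 + (j:ℤ)))) x) * t ^ (x * (i'' + 1)))
      = ∑ x ∈ Finset.range ((k+1) ⊓ i' + 1),
        poch (t ^ (-(k:ℤ))) x * poch (t ^ (-(i':ℤ))) x /
          (poch t x * poch (t ^ (-((k:ℤ) + 1 + (j:ℤ)))) x) * t ^ (x * (i'' + 1)) := by
    apply Finset.sum_subset (Finset.range_subset_range.mpr (by omega))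
    intro x hx hx'
    rw [Finset.mem_range] at hx
    rw [Finset.mem_range, not_lt] at hx'
    rw [poch_neg_zero k x (by omega)]
    simp
  rw [hext]
  have hal : al (l+1) = al l * (1 - t ^ (l+1)) := by
    rw [al, Finset.prod_range_succ, ← al]
  rw [hal]
  have hsum :
      (∑ x ∈ Finset.range ((k+1) ⊓ i' + 1),
        poch (t ^ (-((k:ℤ) + 1))) x * poch (t ^ (-(i':ℤ))) x /
          (poch t x * poch (t ^ (-((k:ℤ) + 1 + (j:ℤ)))) x) * t ^ (x * (i'' + 1 + 1)))
      = t ^ (k+1) * (∑ x ∈ Finset.range ((k+1) ⊓ i' + 1),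
          poch (t ^ (-((k:ℤ) + 1))) x * poch (t ^ (-(i':ℤ))) x /
            (poch t x * poch (t ^ (-((k:ℤ) + 1 + (j:ℤ)))) x) * t ^ (x * (i'' + 1)))
        + (1 - t ^ (k+1)) * (∑ x ∈ Finset.range ((k+1) ⊓ i' + 1),
          poch (t ^ (-(k:ℤ))) x * poch (t ^ (-(i':ℤ))) x /
            (poch t x * poch (t ^ (-((k:ℤ) + 1 + (j:ℤ)))) x) * t ^ (x * (i'' + 1))) := by
    rw [Finset.mul_sum, Finset.mul_sum, ← Finset.sum_add_distrib]
    refine Finset.sum_congr rfl fun n _ => ?_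
    have hk := hkk n
    rw [show n * (i'' + 1 + 1) = n * (i'' + 1) + n by ring, pow_add]
    linear_combination (poch (t ^ (-(i':ℤ))) n /
      (poch t n * poch (t ^ (-((k:ℤ) + 1 + (j:ℤ)))) n) * t ^ (n * (i'' + 1))) * hk
  linear_combination (al (k+1+j) * al l * (1 - t ^ (l+1))) * hsum
end
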